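/- For every integer n ≥ 0, ∫_0^π (sin((n+1)θ)/sin θ)^2 sin θ dθ = 2 Σ_{j=0}^{n} 1/(2j+1). -/

import Mathlib

open Real intervalIntegral

private lemma key (a θ : ℝ) :
    Real.sin (a + θ) ^ 2 = Real.sin a ^ 2 + Real.sin (2 * a + θ) * Real.sin θ := by
  have h : 2 * a + θ = a + (a + θ) := by ring
  rw [h, Real.sin_add a (a + θ), Real.sin_add a θ, Real.cos_add a θ]
  linear_combination (Real.sin a) ^ 2 * (Real.sin_sq_add_cos_sq θ)

private lemma f_eq_g (n : ℕ) (θ : ℝ) :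
    (Real.sin (((n : ℝ) + 1) * θ) / Real.sin θ) ^ 2 * Real.sin θ
      = ((Polynomial.Chebyshev.U ℝ (n : ℤ)).eval (Real.cos θ)) ^ 2 * Real.sin θ := by
  by_cases hs : Real.sin θ = 0
  · simp [hs]
  · have h := Polynomial.Chebyshev.U_real_cos θ (n : ℤ)
    push_cast at h
    have h2 : Real.sin (((n : ℝ) + 1) * θ) / Real.sin θ
        = (Polynomial.Chebyshev.U ℝ (n : ℤ)).eval (Real.cos θ) := by
      rw [← h, mul_div_assoc, div_self hs, mul_one]
    rw [h2]

private lemma hstep (n : ℕ) (θ : ℝ) :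
    (Real.sin ((((n + 1 : ℕ) : ℝ) + 1) * θ) / Real.sin θ) ^ 2 * Real.sin θ
      = (Real.sin ((((n : ℕ) : ℝ) + 1) * θ) / Real.sin θ) ^ 2 * Real.sin θ
        + Real.sin ((2 * (n : ℝ) + 3) * θ) := by
  by_cases hs : Real.sin θ = 0
  · have hz : Real.sin ((2 * (n : ℝ) + 3) * θ) = 0 := by
      have hs' := hs
      rw [Real.sin_eq_zero_iff] at hs'
      obtain ⟨j, hj⟩ := hs'
      rw [← hj, show (2 * (n : ℝ) + 3) * ((j : ℝ) * Real.pi)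
          = (((2 * n + 3) * j : ℤ) : ℝ) * Real.pi by push_cast; ring]
      exact Real.sin_int_mul_pi _
    simp [hs, hz]
  · have hk := key (((n : ℝ) + 1) * θ) θ
    have e1 : ((n : ℝ) + 1) * θ + θ = (((n + 1 : ℕ) : ℝ) + 1) * θ := by push_cast; ring
    have e2 : 2 * (((n : ℝ) + 1) * θ) + θ = (2 * (n : ℝ) + 3) * θ := by ring
    rw [e1, e2] at hk
    field_simp
    push_cast at hk ⊢
    ring_nf at hk ⊢
    linear_combination hk

theorem stmt_11 (n : ℕ) :
    ∫ θ in (0:ℝ)..Real.pi,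
        (Real.sin (((n : ℝ) + 1) * θ) / Real.sin θ) ^ 2 * Real.sin θ
      = 2 * ∑ j ∈ Finset.range (n + 1), 1 / (2 * (j : ℝ) + 1) := by
  induction n with
  | zero =>
    rw [intervalIntegral.integral_congr (g := Real.sin)
      (fun θ _ => by
        by_cases hs : Real.sin θ = 0
        · simp [hs]
        · norm_num
          field_simp)]
    rw [integral_sin]
    norm_num
  | succ n ih =>
    rw [intervalIntegral.integral_congr
      (g := fun θ => (Real.sin ((((n : ℕ) : ℝ) + 1) * θ) / Real.sin θ) ^ 2 * Real.sin θ
        + Real.sin ((2 * (n : ℝ) + 3) * θ))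
      (fun θ _ => hstep n θ)]
    have hint1 : IntervalIntegrable
        (fun θ => (Real.sin ((((n : ℕ) : ℝ) + 1) * θ) / Real.sin θ) ^ 2 * Real.sin θ)
        MeasureTheory.volume 0 Real.pi := by
      have he : (fun θ => (Real.sin ((((n : ℕ) : ℝ) + 1) * θ) / Real.sin θ) ^ 2 * Real.sin θ)
          = fun θ => ((Polynomial.Chebyshev.U ℝ (n : ℤ)).eval (Real.cos θ)) ^ 2 * Real.sin θ := by
        funext θ; exact f_eq_g n θ
      rw [he]
      exact (by fun_prop : Continuous fun θ : ℝ =>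
        ((Polynomial.Chebyshev.U ℝ (n : ℤ)).eval (Real.cos θ)) ^ 2 * Real.sin θ).intervalIntegrable _ _
    have hint2 : IntervalIntegrable (fun θ => Real.sin ((2 * (n : ℝ) + 3) * θ))
        MeasureTheory.volume 0 Real.pi :=
      (by fun_prop : Continuous fun θ : ℝ => Real.sin ((2 * (n : ℝ) + 3) * θ)).intervalIntegrable _ _
    rw [intervalIntegral.integral_add hint1 hint2, ih]
    have hc : (2 * (n : ℝ) + 3) ≠ 0 := by positivity
    have hI : (∫ θ in (0:ℝ)..Real.pi, Real.sin ((2 * (n : ℝ) + 3) * θ))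
        = 2 / (2 * (n : ℝ) + 3) := by
      rw [intervalIntegral.integral_comp_mul_left Real.sin hc, integral_sin]
      have hcp : Real.cos ((2 * (n : ℝ) + 3) * Real.pi) = -1 := by
        have h := Real.cos_add_int_mul_two_pi Real.pi ((n : ℤ) + 1)
        rw [show Real.pi + (((n : ℤ) + 1 : ℤ) : ℝ) * (2 * Real.pi)
            = (2 * (n : ℝ) + 3) * Real.pi by push_cast; ring] at h
        rw [h, Real.cos_pi]
      rw [hcp]
      simp
      ring
    rw [hI]
    conv_rhs => rw [Finset.sum_range_succ]
    push_cast
    ring
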